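/- Fix x,y ∈ E. The following two conditions are equivalent: (i) lim_{ε↓0} liminf_{n→∞} sup_{ξ ∈ C(𝓟_x,𝓟_y)} ξ( d(X_n,Y_n) ≤ ε ) > 0; (ii) for some p > 1 and R ≥ 1, lim_{ε↓0} liminf_{n→∞} sup_{ξ ∈ Ĉ^R_p(𝓟_x,𝓟_y)} ξ( d(X_n,Y_n) ≤ ε ) > 0. Moreover, the condition (iii) sup_{ξ ∈ Ĉ(𝓟_x,𝓟_y)} lim_{ε↓0} liminf_{n→∞} ξ( d(X_n,Y_n) ≤ ε ) > 0 implies (ii) and hence (i). -/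

import Mathlib

open MeasureTheory ProbabilityTheory Filter Topology

noncomputable section

/-- The set of couplings of two measures: probability measures on the product
whose marginals are exactly `P` and `Q`. -/
def Coupling {α : Type*} [MeasurableSpace α] (P Q : Measure α) : Set (Measure (α × α)) :=
  {ξ | IsProbabilityMeasure ξ ∧ ξ.map Prod.fst = P ∧ ξ.map Prod.snd = Q}

/-- The set of generalized couplings: probability measures on the product whose
marginals are absolutely continuous with respect to `P` and `Q` respectively. -/
def GenCoupling {α : Type*} [MeasurableSpace α] (P Q : Measure α) : Set (Measure (α × α)) :=
  {ξ | IsProbabilityMeasure ξ ∧ ξ.map Prod.fst ≪ P ∧ ξ.map Prod.snd ≪ Q}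

/-- The minimal (coupling) cost associated with a cost function `h`:
`h(μ,ν) = inf_{η ∈ C(μ,ν)} ∫ h dη`.  When `h` is a (bounded) metric this is the
Kantorovich–Rubinshtein (coupling) distance. -/
def couplingDist {α : Type*} [MeasurableSpace α] (h : α → α → ℝ) (μ ν : Measure α) : ℝ :=
  sInf ((fun η : Measure (α × α) => ∫ p, h p.1 p.2 ∂η) '' Coupling μ ν)

/-- Left shift on the path space `E^∞ = E^{ℤ₊}`. -/
def pathShift {E : Type*} : (ℕ → E) → (ℕ → E) := fun ω n => ω (n + 1)

/-- `L x` is the law on path space of the Markov chain with transition kernel `P`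
started at `x`: each `L x` is a probability measure, `x ↦ L x` is measurable, the
chain starts at `x`, and the shifted path has law `∫ L y P(x,dy)` (Markov property). -/
structure IsChainLaw {E : Type*} [MeasurableSpace E] (P : Kernel E E)
    (L : E → Measure (ℕ → E)) : Prop where
  prob : ∀ x, IsProbabilityMeasure (L x)
  meas : Measurable L
  init : ∀ x, (L x).map (fun ω => ω 0) = Measure.dirac x
  markov : ∀ x, (L x).map pathShift = (P x).bind L

/-- `d` is a second metric on `E` which is continuous with respect to the original
(Polish) topology of `E`. -/
structure IsAuxMetric {E : Type*} [TopologicalSpace E] (d : E → E → ℝ) : Prop where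
  nonneg : ∀ x y, 0 ≤ d x y
  symm : ∀ x y, d x y = d y x
  triangle : ∀ x y z, d x z ≤ d x y + d y z
  eq_zero_iff : ∀ x y, d x y = 0 ↔ x = y
  cont : Continuous fun p : E × E => d p.1 p.2

/-- A bounded real function. -/
def IsBddFun {E : Type*} (f : E → ℝ) : Prop := ∃ K, ∀ x, |f x| ≤ K

/-- Continuity of `f : E → ℝ` with respect to the metric `d`. -/
def DCont {E : Type*} (d : E → E → ℝ) (f : E → ℝ) : Prop :=
  ∀ x, ∀ ε > 0, ∃ δ > 0, ∀ y, d x y < δ → |f y - f x| < ε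

/-- The chain with one-step kernel `P` is `d`-Feller: `x ↦ ∫ f dP(x,·)` is
`d`-continuous for every bounded `d`-continuous `f`. -/
def DFeller {E : Type*} [MeasurableSpace E] (d : E → E → ℝ) (P : Kernel E E) : Prop :=
  ∀ f : E → ℝ, IsBddFun f → DCont d f → DCont d fun x => ∫ y, f y ∂(P x)

/-- `j : E → E'` realizes the complete metric space `E'` as the `d`-completion of `E`,
and for every `y ∈ E` there are `d`-continuous functions `ρ_n^y` on the completion
converging to `ρ(·,y)` on `E` and to `∞` off `E` (condition (2.4) of the paper). -/
structure ApproxCompletion {E : Type*} [PseudoMetricSpace E] (d : E → E → ℝ)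
    {E' : Type*} [MetricSpace E'] (j : E → E') : Prop where
  isometry : ∀ x y, dist (j x) (j y) = d x y
  dense : DenseRange j
  approx : ∀ y : E, ∃ f : ℕ → E' → ℝ,
    (∀ n, Continuous (f n)) ∧
    (∀ x : E, Tendsto (fun n => f n (j x)) atTop (𝓝 (dist x y))) ∧
    ∀ z : E', z ∉ Set.range j → Tendsto (fun n => f n z) atTop atTop

/-- Generalized couplings whose marginal Radon–Nikodym densities have `L^p` norm at
most `R`. -/
def GenCouplingLp {α : Type*} [MeasurableSpace α] (p R : ℝ) (P Q : Measure α) :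
    Set (Measure (α × α)) :=
  {ξ | ξ ∈ GenCoupling P Q ∧
    (∫⁻ ω, ((ξ.map Prod.fst).rnDeriv P ω) ^ p ∂P) ^ (1 / p) ≤ ENNReal.ofReal R ∧
    (∫⁻ ω, ((ξ.map Prod.snd).rnDeriv Q ω) ^ p ∂Q) ^ (1 / p) ≤ ENNReal.ofReal R}

section Conditions

variable {E : Type*} [MetricSpace E] [PolishSpace E] [MeasurableSpace E] [BorelSpace E]

/-- Condition (i): `lim_{ε↓0} liminf_n sup_{ξ ∈ C(𝓟_x,𝓟_y)} ξ(d(X_n,Y_n) ≤ ε) > 0`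
(the limit as `ε ↓ 0` of the monotone quantity is positive, i.e. there is a positive
lower bound `c` valid for every `ε > 0`). -/
def CondI (L : E → Measure (ℕ → E)) (d : E → E → ℝ) (x y : E) : Prop :=
  ∃ c > (0 : ℝ), ∀ ε > (0 : ℝ),
    c ≤ Filter.liminf (fun n : ℕ =>
      ⨆ ξ ∈ Coupling (L x) (L y),
        (ξ {ω : (ℕ → E) × (ℕ → E) | d (ω.1 n) (ω.2 n) ≤ ε}).toReal) atTop

/-- Condition (ii): for some `p > 1` and `R ≥ 1`,
`lim_{ε↓0} liminf_n sup_{ξ ∈ Ĉ^R_p(𝓟_x,𝓟_y)} ξ(d(X_n,Y_n) ≤ ε) > 0`. -/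
def CondII (L : E → Measure (ℕ → E)) (d : E → E → ℝ) (x y : E) : Prop :=
  ∃ p > (1 : ℝ), ∃ R ≥ (1 : ℝ), ∃ c > (0 : ℝ), ∀ ε > (0 : ℝ),
    c ≤ Filter.liminf (fun n : ℕ =>
      ⨆ ξ ∈ GenCouplingLp p R (L x) (L y),
        (ξ {ω : (ℕ → E) × (ℕ → E) | d (ω.1 n) (ω.2 n) ≤ ε}).toReal) atTop

/-- Condition (iii): `sup_{ξ ∈ Ĉ(𝓟_x,𝓟_y)} lim_{ε↓0} liminf_n ξ(d(X_n,Y_n) ≤ ε) > 0`,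
i.e. some generalized coupling `ξ` has `lim_{ε↓0} liminf_n ξ(d(X_n,Y_n) ≤ ε) > 0`. -/
def CondIII (L : E → Measure (ℕ → E)) (d : E → E → ℝ) (x y : E) : Prop :=
  ∃ ξ ∈ GenCoupling (L x) (L y), ∃ c > (0 : ℝ), ∀ ε > (0 : ℝ),
    c ≤ Filter.liminf (fun n : ℕ =>
      (ξ {ω : (ℕ → E) × (ℕ → E) | d (ω.1 n) (ω.2 n) ≤ ε}).toReal) atTop

end Conditions

section Helpers
open ENNReal Set

namespace CondProof

variable {α : Type*} [MeasurableSpace α]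

lemma aux_marginal (ξ : Measure (α × α)) [IsProbabilityMeasure ξ]
    (μ : Measure α) [IsProbabilityMeasure μ] (π : α × α → α) (hπ : Measurable π)
    (hac : ξ.map π ≪ μ) (k : ℝ≥0∞) (B : Set (α × α))
    (hsub : B ⊆ {ω | (ξ.map π).rnDeriv μ (π ω) ≤ k}) (hB : MeasurableSet B) :
    (ξ.restrict B).map π ≤ k • μ := by
  haveI : IsProbabilityMeasure (ξ.map π) := Measure.isProbabilityMeasure_map hπ.aemeasurable
  set f := (ξ.map π).rnDeriv μ with hf
  have hfm : Measurable f := Measure.measurable_rnDeriv _ _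
  have hfk : MeasurableSet {a | f a ≤ k} := hfm measurableSet_Iic
  rw [Measure.le_iff]
  intro S hS
  rw [Measure.map_apply hπ hS, Measure.restrict_apply' hB, Measure.smul_apply, smul_eq_mul]
  calc ξ (π ⁻¹' S ∩ B) ≤ ξ (π ⁻¹' S ∩ π ⁻¹' {a | f a ≤ k}) := by
        refine measure_mono (fun ω hω => ⟨hω.1, hsub hω.2⟩)
    _ = ξ (π ⁻¹' (S ∩ {a | f a ≤ k})) := by rw [Set.preimage_inter]
    _ = (ξ.map π) (S ∩ {a | f a ≤ k}) := (Measure.map_apply hπ (hS.inter hfk)).symm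
    _ = ∫⁻ a in S ∩ {a | f a ≤ k}, f a ∂μ := by
        conv_lhs => rw [← Measure.withDensity_rnDeriv_eq _ _ hac]
        rw [withDensity_apply _ (hS.inter hfk)]
    _ ≤ ∫⁻ _ in S ∩ {a | f a ≤ k}, k ∂μ :=
        setLIntegral_mono measurable_const (fun a ha => ha.2)
    _ = k * μ (S ∩ {a | f a ≤ k}) := by rw [setLIntegral_const]
    _ ≤ k * μ S := mul_le_mul_right (measure_mono Set.inter_subset_left) k

/-- From a generalized coupling, build a true coupling dominating the restricted
generalized coupling on the set where both densities are bounded by `k`. -/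
lemma exists_coupling_ge (μ ν : Measure α) [IsProbabilityMeasure μ] [IsProbabilityMeasure ν]
    (ξ : Measure (α × α)) (hξ : ξ ∈ GenCoupling μ ν) {k : ℝ≥0∞}
    (hk2 : 2 ≤ k) (hki : k ≠ ∞) :
    ∃ η ∈ Coupling μ ν, ∀ A : Set (α × α),
      k⁻¹ * k⁻¹ * ξ (A ∩ {ω : α × α | (ξ.map Prod.fst).rnDeriv μ ω.1 ≤ k ∧
        (ξ.map Prod.snd).rnDeriv ν ω.2 ≤ k}) ≤ η A := by
  obtain ⟨hprob, hac1, hac2⟩ := hξ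
  have hk0 : k ≠ 0 := by intro h; rw [h] at hk2; exact (by norm_num : ¬ (2:ℝ≥0∞) ≤ 0) hk2
  have hkinv1 : k⁻¹ ≤ 1 := ENNReal.inv_le_one.mpr (le_trans one_le_two hk2)
  have hkinv2 : k⁻¹ ≤ 2⁻¹ := ENNReal.inv_le_inv' hk2
  set f := (ξ.map Prod.fst).rnDeriv μ with hf
  set g := (ξ.map Prod.snd).rnDeriv ν with hg
  set B : Set (α × α) := {ω | f ω.1 ≤ k ∧ g ω.2 ≤ k} with hBdef
  have hfm : Measurable f := Measure.measurable_rnDeriv _ _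
  have hgm : Measurable g := Measure.measurable_rnDeriv _ _
  have hB : MeasurableSet B :=
    ((hfm.comp measurable_fst) measurableSet_Iic).inter
      ((hgm.comp measurable_snd) measurableSet_Iic)
  set ξ₀ : Measure (α × α) := (k⁻¹ * k⁻¹) • ξ.restrict B with hξ₀
  have key1 : (ξ.restrict B).map Prod.fst ≤ k • μ :=
    aux_marginal ξ μ Prod.fst measurable_fst hac1 k B (fun ω hω => hω.1) hB
  have key2 : (ξ.restrict B).map Prod.snd ≤ k • ν :=
    aux_marginal ξ ν Prod.snd measurable_snd hac2 k B (fun ω hω => hω.2) hB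
  have hm1 : ξ₀.map Prod.fst ≤ k⁻¹ • μ := by
    rw [Measure.le_iff]
    intro S hS
    rw [hξ₀, Measure.map_smul, Measure.smul_apply, smul_eq_mul,
      Measure.smul_apply, smul_eq_mul]
    calc k⁻¹ * k⁻¹ * ((ξ.restrict B).map Prod.fst S)
        ≤ k⁻¹ * k⁻¹ * (k * μ S) := by
          refine mul_le_mul_right ?_ _
          have := (Measure.le_iff.mp key1) S hS
          simpa [Measure.smul_apply, smul_eq_mul] using this
      _ = (k⁻¹ * k) * (k⁻¹ * μ S) := by ring
      _ = k⁻¹ * μ S := by rw [ENNReal.inv_mul_cancel hk0 hki, one_mul]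
  have hm2 : ξ₀.map Prod.snd ≤ k⁻¹ • ν := by
    rw [Measure.le_iff]
    intro S hS
    rw [hξ₀, Measure.map_smul, Measure.smul_apply, smul_eq_mul,
      Measure.smul_apply, smul_eq_mul]
    calc k⁻¹ * k⁻¹ * ((ξ.restrict B).map Prod.snd S)
        ≤ k⁻¹ * k⁻¹ * (k * ν S) := by
          refine mul_le_mul_right ?_ _
          have := (Measure.le_iff.mp key2) S hS
          simpa [Measure.smul_apply, smul_eq_mul] using this
      _ = (k⁻¹ * k) * (k⁻¹ * ν S) := by ring
      _ = k⁻¹ * ν S := by rw [ENNReal.inv_mul_cancel hk0 hki, one_mul]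
  have hm1' : ξ₀.map Prod.fst ≤ μ := by
    refine hm1.trans ?_
    rw [Measure.le_iff]; intro S hS
    rw [Measure.smul_apply, smul_eq_mul]
    calc k⁻¹ * μ S ≤ 1 * μ S := mul_le_mul_left hkinv1 _
      _ = μ S := one_mul _
  have hm2' : ξ₀.map Prod.snd ≤ ν := by
    refine hm2.trans ?_
    rw [Measure.le_iff]; intro S hS
    rw [Measure.smul_apply, smul_eq_mul]
    calc k⁻¹ * ν S ≤ 1 * ν S := mul_le_mul_left hkinv1 _
      _ = ν S := one_mul _
  set t : ℝ≥0∞ := ξ₀ Set.univ with ht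
  have htfst : (ξ₀.map Prod.fst) Set.univ = t := by
    rw [Measure.map_apply measurable_fst MeasurableSet.univ, Set.preimage_univ]
  have htsnd : (ξ₀.map Prod.snd) Set.univ = t := by
    rw [Measure.map_apply measurable_snd MeasurableSet.univ, Set.preimage_univ]
  have ht2 : t ≤ 2⁻¹ := by
    have := (Measure.le_iff.mp hm1) Set.univ MeasurableSet.univ
    rw [htfst, Measure.smul_apply, smul_eq_mul, measure_univ, mul_one] at this
    exact this.trans hkinv2
  have h1t0 : (1 : ℝ≥0∞) - t ≠ 0 := by
    rw [Ne, tsub_eq_zero_iff_le]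
    intro h
    have : (1:ℝ≥0∞) ≤ 2⁻¹ := h.trans ht2
    norm_num at this
  have h1ti : (1 : ℝ≥0∞) - t ≠ ∞ := by
    refine ne_top_of_le_ne_top one_ne_top tsub_le_self
  set ν₁ : Measure α := μ - ξ₀.map Prod.fst with hν₁
  set ν₂ : Measure α := ν - ξ₀.map Prod.snd with hν₂
  haveI : IsFiniteMeasure ν₁ := isFiniteMeasure_of_le μ Measure.sub_le
  haveI : IsFiniteMeasure ν₂ := isFiniteMeasure_of_le ν Measure.sub_le
  haveI : IsFiniteMeasure (ξ₀.map Prod.fst) := isFiniteMeasure_of_le μ hm1'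
  haveI : IsFiniteMeasure (ξ₀.map Prod.snd) := isFiniteMeasure_of_le ν hm2'
  set η : Measure (α × α) := ξ₀ + ((1 - t)⁻¹ • (ν₁.prod ν₂)) with hη
  have hν₂univ : ν₂ Set.univ = 1 - t := by
    rw [hν₂, Measure.sub_apply MeasurableSet.univ hm2', htsnd, measure_univ]
  have hν₁univ : ν₁ Set.univ = 1 - t := by
    rw [hν₁, Measure.sub_apply MeasurableSet.univ hm1', htfst, measure_univ]
  have hmapfst : η.map Prod.fst = μ := by
    have h2 : (((1 - t)⁻¹ • (ν₁.prod ν₂)).map Prod.fst) = ν₁ := by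
      rw [Measure.map_smul, Measure.map_fst_prod, hν₂univ, smul_smul,
        ENNReal.inv_mul_cancel h1t0 h1ti, one_smul]
    rw [hη, Measure.map_add _ _ measurable_fst, h2, add_comm]
    exact Measure.sub_add_cancel_of_le hm1'
  have hmapsnd : η.map Prod.snd = ν := by
    have h2 : (((1 - t)⁻¹ • (ν₁.prod ν₂)).map Prod.snd) = ν₂ := by
      rw [Measure.map_smul, Measure.map_snd_prod, hν₁univ, smul_smul,
        ENNReal.inv_mul_cancel h1t0 h1ti, one_smul]
    rw [hη, Measure.map_add _ _ measurable_snd, h2, add_comm]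
    exact Measure.sub_add_cancel_of_le hm2'
  have hηprob : IsProbabilityMeasure η := by
    constructor
    have : η Set.univ = (η.map Prod.fst) Set.univ := by
      rw [Measure.map_apply measurable_fst MeasurableSet.univ, Set.preimage_univ]
    rw [this, hmapfst, measure_univ]
  refine ⟨η, ⟨hηprob, hmapfst, hmapsnd⟩, fun A => ?_⟩
  calc k⁻¹ * k⁻¹ * ξ (A ∩ B) = ξ₀ A := by
        rw [hξ₀, Measure.smul_apply, smul_eq_mul, Measure.restrict_apply' hB]
    _ ≤ η A := by rw [hη, Measure.add_apply]; exact le_self_add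

/-- Tail bound from an `L^p` bound on the density. -/
lemma tail_bound (μ m : Measure α) [IsFiniteMeasure m] [SigmaFinite μ]
    (hac : m ≪ μ) {p : ℝ} (hp : 1 < p) (C : ℝ≥0∞)
    (hC : ∫⁻ ω, (m.rnDeriv μ ω) ^ p ∂μ ≤ C) {k : ℝ≥0∞} (hk1 : 1 ≤ k) (hki : k ≠ ∞) :
    m {ω | k < m.rnDeriv μ ω} ≤ k ^ (1 - p) * C := by
  set f := m.rnDeriv μ with hf
  have hfm : Measurable f := Measure.measurable_rnDeriv _ _
  have hS : MeasurableSet {ω | k < f ω} := hfm measurableSet_Ioi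
  have hk0 : k ≠ 0 := by
    intro h; rw [h] at hk1; exact (by norm_num : ¬ (1:ℝ≥0∞) ≤ 0) hk1
  have hpt : ∀ ω ∈ {ω | k < f ω}, f ω ≤ k ^ (1 - p) * f ω ^ p := by
    intro ω hω
    have hωk : k < f ω := hω
    by_cases hfin : f ω = ∞
    · have hfp : f ω ^ p = ∞ := by
        rw [hfin]; exact ENNReal.top_rpow_of_pos (lt_trans one_pos hp)
      rw [hfp, ENNReal.mul_top]
      · exact le_top
      · simp only [Ne, ENNReal.rpow_eq_zero_iff, not_or, not_and]
        constructor
        · intro h; exact absurd h hk0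
        · intro h; exact absurd h hki
    · have hω0 : f ω ≠ 0 := by
        intro h; rw [h] at hωk
        exact absurd hωk (not_lt_of_ge (zero_le : 0 ≤ k))
      have h1 : f ω ^ (1 - p) ≤ k ^ (1 - p) := by
        rw [show (1 - p) = -(p - 1) by ring, ENNReal.rpow_neg, ENNReal.rpow_neg]
        exact ENNReal.inv_le_inv' (ENNReal.rpow_le_rpow hωk.le (by linarith))
      calc f ω = f ω ^ ((1 - p) + p) := by
            rw [show (1 - p) + p = (1:ℝ) from by ring, ENNReal.rpow_one]
        _ = f ω ^ (1 - p) * f ω ^ p := ENNReal.rpow_add _ _ hω0 hfin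
        _ ≤ k ^ (1 - p) * f ω ^ p := mul_le_mul_left h1 _
  calc m {ω | k < f ω} = ∫⁻ ω in {ω | k < f ω}, f ω ∂μ :=
        (Measure.setLIntegral_rnDeriv hac _).symm
    _ ≤ ∫⁻ ω in {ω | k < f ω}, k ^ (1 - p) * f ω ^ p ∂μ :=
        setLIntegral_mono (by fun_prop) hpt
    _ = k ^ (1 - p) * ∫⁻ ω in {ω | k < f ω}, f ω ^ p ∂μ := by
        rw [lintegral_const_mul _ (by fun_prop)]
    _ ≤ k ^ (1 - p) * ∫⁻ ω, f ω ^ p ∂μ :=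
        mul_le_mul_right (setLIntegral_le_lintegral _ _) _
    _ ≤ k ^ (1 - p) * C := mul_le_mul_right hC _

lemma rnDeriv_le_const (m μ : Measure α) [IsFiniteMeasure m] [SigmaFinite μ]
    (C : ℝ≥0∞) (h : m ≤ C • μ) : m.rnDeriv μ ≤ᵐ[μ] fun _ => C := by
  have hac : m ≪ μ :=
    (Measure.absolutelyContinuous_of_le h).trans Measure.smul_absolutelyContinuous
  refine ae_le_of_forall_setLIntegral_le_of_sigmaFinite
    (Measure.measurable_rnDeriv _ _) ?_
  intro s hs _
  rw [Measure.setLIntegral_rnDeriv hac, setLIntegral_const]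
  calc m s ≤ (C • μ) s := h s
    _ = C * μ s := by rw [Measure.smul_apply, smul_eq_mul]

lemma tendsto_tail (m μ : Measure α) [IsFiniteMeasure m] [SigmaFinite μ] (hac : m ≪ μ) :
    Tendsto (fun kk : ℕ => m {ω | (kk : ℝ≥0∞) < m.rnDeriv μ ω}) atTop (𝓝 0) := by
  set f := m.rnDeriv μ with hf
  have hfm : Measurable f := Measure.measurable_rnDeriv _ _
  have hmeas : ∀ kk : ℕ, MeasurableSet {ω | (kk : ℝ≥0∞) < f ω} :=
    fun kk => hfm measurableSet_Ioi
  have hanti : Antitone (fun kk : ℕ => {ω | (kk : ℝ≥0∞) < f ω}) := by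
    intro i j hij ω hω
    exact lt_of_le_of_lt ((Nat.cast_le (α := ℝ≥0∞)).mpr hij) hω
  have hiInter : (⋂ kk : ℕ, {ω | (kk : ℝ≥0∞) < f ω}) = {ω | f ω = ∞} := by
    ext ω
    simp only [Set.mem_iInter, Set.mem_setOf_eq]
    constructor
    · intro h
      by_contra hne
      obtain ⟨n, hn⟩ := ENNReal.exists_nat_gt hne
      exact absurd (h n) (not_lt_of_ge hn.le)
    · intro h n; rw [h]; exact ENNReal.natCast_lt_top n
  have hnull : m {ω | f ω = ∞} = 0 := by
    have hμnull : μ {ω | f ω = ∞} = 0 := by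
      have := Measure.rnDeriv_lt_top m μ
      rw [← hf] at this
      simpa [ae_iff, not_lt, top_le_iff] using this
    rw [← Measure.setLIntegral_rnDeriv hac, ← hf, setLIntegral_measure_zero _ _ hμnull]
  have := tendsto_measure_iInter_atTop (μ := m) (fun kk => (hmeas kk).nullMeasurableSet) hanti
    ⟨0, measure_ne_top m _⟩
  rw [hiInter, hnull] at this
  exact this

section Sup

variable {β : Type*} [MeasurableSpace β]

lemma toReal_meas_le_one (ξ : Measure β) [IsProbabilityMeasure ξ] (A : Set β) :
    (ξ A).toReal ≤ 1 := by
  have h := prob_le_one (μ := ξ) (s := A)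
  calc (ξ A).toReal ≤ (1 : ℝ≥0∞).toReal :=
        ENNReal.toReal_mono ENNReal.one_ne_top h
    _ = 1 := ENNReal.toReal_one

lemma biSup_meas_le_one {S : Set (Measure β)} (hS : ∀ ξ ∈ S, IsProbabilityMeasure ξ)
    (A : Set β) : (⨆ ξ ∈ S, (ξ A).toReal) ≤ 1 := by
  refine Real.iSup_le (fun ξ => Real.iSup_le (fun hξ => ?_) zero_le_one) zero_le_one
  haveI := hS ξ hξ
  exact toReal_meas_le_one ξ A

lemma biSup_meas_nonneg {S : Set (Measure β)} (A : Set β) :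
    0 ≤ ⨆ ξ ∈ S, (ξ A).toReal :=
  Real.iSup_nonneg (fun ξ => Real.iSup_nonneg (fun _ => ENNReal.toReal_nonneg))

lemma le_biSup_meas {S : Set (Measure β)} (hS : ∀ ξ ∈ S, IsProbabilityMeasure ξ)
    {ξ : Measure β} (hξ : ξ ∈ S) (A : Set β) :
    (ξ A).toReal ≤ ⨆ ξ ∈ S, (ξ A).toReal := by
  have hbdd : BddAbove (Set.range fun ξ : Measure β => ⨆ _ : ξ ∈ S, (ξ A).toReal) := by
    refine ⟨1, ?_⟩
    rintro z ⟨ρ, rfl⟩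
    refine Real.iSup_le (fun hρ => ?_) zero_le_one
    haveI := hS ρ hρ
    exact toReal_meas_le_one ρ A
  refine le_trans ?_ (le_ciSup hbdd ξ)
  haveI := hS ξ hξ
  have hbdd2 : BddAbove (Set.range fun _ : ξ ∈ S => (ξ A).toReal) := by
    refine ⟨1, ?_⟩; rintro z ⟨hρ, rfl⟩; exact toReal_meas_le_one ξ A
  exact le_ciSup hbdd2 hξ

lemma biSup_meas_mono {S T : Set (Measure β)} (hT : ∀ ξ ∈ T, IsProbabilityMeasure ξ)
    (hST : S ⊆ T) (A : Set β) :
    (⨆ ξ ∈ S, (ξ A).toReal) ≤ ⨆ ξ ∈ T, (ξ A).toReal := by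
  refine Real.iSup_le (fun ξ => Real.iSup_le (fun hξ => ?_) (biSup_meas_nonneg A))
    (biSup_meas_nonneg A)
  exact le_biSup_meas hT (hST hξ) A

lemma exists_of_lt_biSup {S : Set (Measure β)} {A : Set β} {a : ℝ} (ha : 0 ≤ a)
    (h : a < ⨆ ξ ∈ S, (ξ A).toReal) : ∃ ξ ∈ S, a < (ξ A).toReal := by
  obtain ⟨ξ, hξ⟩ := exists_lt_of_lt_ciSup h
  by_cases hmem : ξ ∈ S
  · refine ⟨ξ, hmem, ?_⟩
    rwa [ciSup_pos hmem] at hξ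
  · exfalso
    haveI : IsEmpty (ξ ∈ S) := ⟨hmem⟩
    rw [Real.iSup_of_isEmpty] at hξ
    exact absurd hξ (not_lt_of_ge ha)

end Sup

lemma lintegral_rpow_le_of_rpow_le {μ : Measure α} {f : α → ℝ≥0∞} {p : ℝ} (hp : 1 < p)
    {R : ℝ≥0∞} (h : (∫⁻ ω, (f ω) ^ p ∂μ) ^ (1 / p) ≤ R) :
    ∫⁻ ω, (f ω) ^ p ∂μ ≤ R ^ p := by
  have hp0 : (0:ℝ) < p := lt_trans one_pos hp
  have := ENNReal.rpow_le_rpow h hp0.le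
  rwa [← ENNReal.rpow_mul, one_div, inv_mul_cancel₀ (ne_of_gt hp0), ENNReal.rpow_one] at this

/-- The key construction: from any `L^p`-bounded generalized coupling carrying mass at
least `c/2` on `A`, produce a true coupling carrying mass at least `c'` on `A`,
with `c'` depending only on `p`, `R`, `c`. -/
lemma lemmaA (μ ν : Measure α) [IsProbabilityMeasure μ] [IsProbabilityMeasure ν]
    {p R c : ℝ} (hp : 1 < p) (hR : 1 ≤ R) (hc : 0 < c) :
    ∃ c' > (0:ℝ), ∀ (A : Set (α × α)) (ξ : Measure (α × α)),
      ξ ∈ GenCouplingLp p R μ ν → ENNReal.ofReal (c / 2) ≤ ξ A →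
      ∃ η ∈ Coupling μ ν, ENNReal.ofReal c' ≤ η A := by
  have hp1 : (0:ℝ) < p - 1 := by linarith
  have hR0 : (0:ℝ) < R := lt_of_lt_of_le one_pos hR
  have hRp : (0:ℝ) < R ^ p := Real.rpow_pos_of_pos hR0 p
  -- choose the level K
  obtain ⟨K, hKD, hK2⟩ :=
    (((tendsto_rpow_atTop hp1).eventually_ge_atTop (8 * R ^ p / c)).and
      (eventually_ge_atTop (2:ℝ))).exists
  have hK0 : (0:ℝ) < K := lt_of_lt_of_le two_pos hK2
  set k : ℝ≥0∞ := ENNReal.ofReal K with hk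
  have hk2 : (2:ℝ≥0∞) ≤ k := by
    rw [hk, show (2:ℝ≥0∞) = ENNReal.ofReal 2 by simp]
    exact ENNReal.ofReal_le_ofReal hK2
  have hk1 : (1:ℝ≥0∞) ≤ k := le_trans one_le_two hk2
  have hki : k ≠ ∞ := ENNReal.ofReal_ne_top
  -- the real inequality for the tail
  have hreal : K ^ (1 - p) * R ^ p ≤ c / 8 := by
    have hKp : (0:ℝ) < K ^ (p - 1) := Real.rpow_pos_of_pos hK0 _
    have hD : (0:ℝ) < 8 * R ^ p / c := by positivity
    have hKinv : (K ^ (p - 1))⁻¹ ≤ (8 * R ^ p / c)⁻¹ :=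
      inv_anti₀ hD hKD
    have h1 : K ^ (1 - p) = (K ^ (p - 1))⁻¹ := by
      rw [show (1 - p) = -(p - 1) from by ring, Real.rpow_neg hK0.le]
    rw [h1]
    calc (K ^ (p - 1))⁻¹ * R ^ p ≤ (8 * R ^ p / c)⁻¹ * R ^ p :=
          mul_le_mul_of_nonneg_right hKinv hRp.le
      _ = c / 8 := by field_simp
  have hbound : k ^ (1 - p) * (ENNReal.ofReal R) ^ p ≤ ENNReal.ofReal (c / 8) := by
    rw [hk, ENNReal.ofReal_rpow_of_pos hK0, ENNReal.ofReal_rpow_of_pos hR0,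
      ← ENNReal.ofReal_mul (Real.rpow_nonneg hK0.le _)]
    exact ENNReal.ofReal_le_ofReal hreal
  refine ⟨K⁻¹ * K⁻¹ * (c / 4), by positivity, ?_⟩
  intro A ξ hξ hA
  obtain ⟨hgen, hLp1, hLp2⟩ := hξ
  obtain ⟨hprob, hac1, hac2⟩ := hgen
  haveI := hprob
  haveI : IsProbabilityMeasure (ξ.map Prod.fst) :=
    Measure.isProbabilityMeasure_map measurable_fst.aemeasurable
  haveI : IsProbabilityMeasure (ξ.map Prod.snd) :=
    Measure.isProbabilityMeasure_map measurable_snd.aemeasurable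
  set f := (ξ.map Prod.fst).rnDeriv μ with hf
  set g := (ξ.map Prod.snd).rnDeriv ν with hg
  have hfm : Measurable f := Measure.measurable_rnDeriv _ _
  have hgm : Measurable g := Measure.measurable_rnDeriv _ _
  set B : Set (α × α) := {ω : α × α | f ω.1 ≤ k ∧ g ω.2 ≤ k} with hBdef
  -- tail bounds
  have htail1 : (ξ.map Prod.fst) {ω | k < f ω} ≤ ENNReal.ofReal (c / 8) :=
    le_trans (tail_bound μ (ξ.map Prod.fst) hac1 hp _
      (lintegral_rpow_le_of_rpow_le hp hLp1) hk1 hki) hbound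
  have htail2 : (ξ.map Prod.snd) {ω | k < g ω} ≤ ENNReal.ofReal (c / 8) :=
    le_trans (tail_bound ν (ξ.map Prod.snd) hac2 hp _
      (lintegral_rpow_le_of_rpow_le hp hLp2) hk1 hki) hbound
  have hBc : ξ Bᶜ ≤ ENNReal.ofReal (c / 4) := by
    have hsub : Bᶜ ⊆ {ω : α × α | k < f ω.1} ∪ {ω : α × α | k < g ω.2} := by
      intro ω hω
      simp only [hBdef, Set.mem_compl_iff, Set.mem_setOf_eq, not_and_or, not_le] at hω
      exact hω
    calc ξ Bᶜ ≤ ξ ({ω : α × α | k < f ω.1} ∪ {ω : α × α | k < g ω.2}) := measure_mono hsub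
      _ ≤ ξ {ω : α × α | k < f ω.1} + ξ {ω : α × α | k < g ω.2} := measure_union_le _ _
      _ = (ξ.map Prod.fst) {ω | k < f ω} + (ξ.map Prod.snd) {ω | k < g ω} := by
          rw [Measure.map_apply measurable_fst (measurableSet_lt measurable_const hfm),
            Measure.map_apply measurable_snd (measurableSet_lt measurable_const hgm)]
          rfl
      _ ≤ ENNReal.ofReal (c / 8) + ENNReal.ofReal (c / 8) := add_le_add htail1 htail2
      _ = ENNReal.ofReal (c / 4) := by
          rw [← ENNReal.ofReal_add (by positivity) (by positivity)]
          congr 1; ring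
  have hAB : ENNReal.ofReal (c / 4) ≤ ξ (A ∩ B) := by
    have h1 : ξ A ≤ ξ (A ∩ B) + ξ Bᶜ := by
      refine le_trans (measure_mono ?_) (measure_union_le _ _)
      intro ω hω
      by_cases hb : ω ∈ B
      · exact Or.inl ⟨hω, hb⟩
      · exact Or.inr hb
    calc ENNReal.ofReal (c / 4) = ENNReal.ofReal (c / 2) - ENNReal.ofReal (c / 4) := by
          rw [← ENNReal.ofReal_sub _ (by positivity)]
          congr 1; ring
      _ ≤ ξ A - ξ Bᶜ := tsub_le_tsub hA hBc
      _ ≤ ξ (A ∩ B) := tsub_le_iff_right.mpr h1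
  obtain ⟨η, hηC, hηge⟩ := exists_coupling_ge μ ν ξ ⟨hprob, hac1, hac2⟩ hk2 hki
  refine ⟨η, hηC, ?_⟩
  refine le_trans ?_ (hηge A)
  calc ENNReal.ofReal (K⁻¹ * K⁻¹ * (c / 4))
      = k⁻¹ * k⁻¹ * ENNReal.ofReal (c / 4) := by
        rw [ENNReal.ofReal_mul (by positivity), ENNReal.ofReal_mul (by positivity),
          ENNReal.ofReal_inv_of_pos hK0, ← hk]
    _ ≤ k⁻¹ * k⁻¹ * ξ (A ∩ B) := mul_le_mul_right hAB _

lemma coupling_subset (μ ν : Measure α) [IsProbabilityMeasure μ] [IsProbabilityMeasure ν]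
    {p R : ℝ} (hR : 1 ≤ R) : Coupling μ ν ⊆ GenCouplingLp p R μ ν := by
  rintro ξ ⟨hprob, h1, h2⟩
  have hint : ∀ (ρ : Measure α), IsProbabilityMeasure ρ →
      (∫⁻ ω, (ρ.rnDeriv ρ ω) ^ p ∂ρ) ^ (1 / p) ≤ ENNReal.ofReal R := by
    intro ρ hρ
    haveI := hρ
    have hone : ∫⁻ ω, (ρ.rnDeriv ρ ω) ^ p ∂ρ = 1 := by
      rw [lintegral_congr_ae ((Measure.rnDeriv_self ρ).mono fun a ha => by
        rw [ha, ENNReal.one_rpow])]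
      rw [lintegral_one, measure_univ]
    rw [hone, ENNReal.one_rpow]
    exact ENNReal.one_le_ofReal.mpr hR
  refine ⟨⟨hprob, by rw [h1], by rw [h2]⟩, ?_, ?_⟩
  · rw [h1]; exact hint μ ‹_›
  · rw [h2]; exact hint ν ‹_›

/-- Truncation: from a generalized coupling produce an `L^2`-bounded generalized
coupling that loses at most `c/4` of mass on any set. -/
lemma lemmaC (μ ν : Measure α) [IsProbabilityMeasure μ] [IsProbabilityMeasure ν]
    (ξ : Measure (α × α)) (hξ : ξ ∈ GenCoupling μ ν) {c : ℝ} (hc : 0 < c) :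
    ∃ R ≥ (1:ℝ), ∃ ξ' ∈ GenCouplingLp 2 R μ ν,
      ∀ A : Set (α × α), ξ A - ENNReal.ofReal (c / 4) ≤ ξ' A := by
  obtain ⟨hprob, hac1, hac2⟩ := hξ
  haveI := hprob
  haveI : IsProbabilityMeasure (ξ.map Prod.fst) :=
    Measure.isProbabilityMeasure_map measurable_fst.aemeasurable
  haveI : IsProbabilityMeasure (ξ.map Prod.snd) :=
    Measure.isProbabilityMeasure_map measurable_snd.aemeasurable
  set f := (ξ.map Prod.fst).rnDeriv μ with hf
  set g := (ξ.map Prod.snd).rnDeriv ν with hg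
  have hfm : Measurable f := Measure.measurable_rnDeriv _ _
  have hgm : Measurable g := Measure.measurable_rnDeriv _ _
  set δ : ℝ≥0∞ := min 4⁻¹ (ENNReal.ofReal (c / 8)) with hδdef
  have hδ : 0 < δ := lt_min (by norm_num) (ENNReal.ofReal_pos.mpr (by positivity))
  obtain ⟨kk, hk1, hkt1, hkt2⟩ :=
    ((eventually_ge_atTop 1).and
      (((tendsto_tail (ξ.map Prod.fst) μ hac1).eventually_lt_const hδ).and
        ((tendsto_tail (ξ.map Prod.snd) ν hac2).eventually_lt_const hδ))).exists
  set k : ℝ≥0∞ := (kk : ℝ≥0∞) with hkdef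
  set B : Set (α × α) := {ω : α × α | f ω.1 ≤ k ∧ g ω.2 ≤ k} with hBdef
  have hB : MeasurableSet B :=
    ((hfm.comp measurable_fst) measurableSet_Iic).inter
      ((hgm.comp measurable_snd) measurableSet_Iic)
  have hBc2 : ξ Bᶜ ≤ δ + δ := by
    have hsub : Bᶜ ⊆ {ω : α × α | k < f ω.1} ∪ {ω : α × α | k < g ω.2} := by
      intro ω hω
      simp only [hBdef, Set.mem_compl_iff, Set.mem_setOf_eq, not_and_or, not_le] at hω
      exact hω
    calc ξ Bᶜ ≤ ξ ({ω : α × α | k < f ω.1} ∪ {ω : α × α | k < g ω.2}) := measure_mono hsub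
      _ ≤ ξ {ω : α × α | k < f ω.1} + ξ {ω : α × α | k < g ω.2} := measure_union_le _ _
      _ = (ξ.map Prod.fst) {ω | k < f ω} + (ξ.map Prod.snd) {ω | k < g ω} := by
          rw [Measure.map_apply measurable_fst (measurableSet_lt measurable_const hfm),
            Measure.map_apply measurable_snd (measurableSet_lt measurable_const hgm)]
          rfl
      _ ≤ δ + δ := add_le_add hkt1.le hkt2.le
  have hBchalf : ξ Bᶜ ≤ 2⁻¹ := by
    refine hBc2.trans ?_
    calc δ + δ ≤ 4⁻¹ + 4⁻¹ := add_le_add (min_le_left _ _) (min_le_left _ _)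
      _ ≤ 2⁻¹ := by
          rw [show (4:ℝ≥0∞)⁻¹ + 4⁻¹ = 2 * 4⁻¹ from (two_mul _).symm]
          rw [show (4:ℝ≥0∞) = 2 * 2 from by norm_num, ENNReal.mul_inv (by norm_num) (by norm_num)]
          rw [← mul_assoc, ENNReal.mul_inv_cancel (by norm_num) (by norm_num), one_mul]
  have hBcc : ξ Bᶜ ≤ ENNReal.ofReal (c / 4) := by
    refine hBc2.trans ?_
    calc δ + δ ≤ ENNReal.ofReal (c / 8) + ENNReal.ofReal (c / 8) :=
          add_le_add (min_le_right _ _) (min_le_right _ _)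
      _ = ENNReal.ofReal (c / 4) := by
          rw [← ENNReal.ofReal_add (by positivity) (by positivity)]
          congr 1; ring
  have hBge : 2⁻¹ ≤ ξ B := by
    have h1 : (1:ℝ≥0∞) ≤ ξ B + ξ Bᶜ := by
      rw [show (1:ℝ≥0∞) = ξ Set.univ from (measure_univ).symm]
      refine le_trans (measure_mono ?_) (measure_union_le _ _)
      intro ω _
      by_cases hb : ω ∈ B
      · exact Or.inl hb
      · exact Or.inr hb
    calc (2:ℝ≥0∞)⁻¹ = 1 - 2⁻¹ := ENNReal.one_sub_inv_two.symm
      _ ≤ 1 - ξ Bᶜ := tsub_le_tsub le_rfl hBchalf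
      _ ≤ ξ B := tsub_le_iff_right.mpr h1
  have hB0 : ξ B ≠ 0 := by
    intro h; rw [h] at hBge
    exact (by norm_num : ¬ ((2:ℝ≥0∞)⁻¹ ≤ 0)) hBge
  have hBinv2 : (ξ B)⁻¹ ≤ 2 := by
    calc (ξ B)⁻¹ ≤ (2⁻¹:ℝ≥0∞)⁻¹ := ENNReal.inv_le_inv' hBge
      _ = 2 := by rw [inv_inv]
  have hBinv1 : (1:ℝ≥0∞) ≤ (ξ B)⁻¹ := by
    rw [show (1:ℝ≥0∞) = 1⁻¹ from by norm_num]
    exact ENNReal.inv_le_inv' prob_le_one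
  set ξ' : Measure (α × α) := (ξ B)⁻¹ • ξ.restrict B with hξ'def
  have hξ'prob : IsProbabilityMeasure ξ' := by
    constructor
    rw [hξ'def, Measure.smul_apply, smul_eq_mul, Measure.restrict_apply' hB, Set.univ_inter]
    exact ENNReal.inv_mul_cancel hB0 (measure_ne_top _ _)
  set C : ℝ≥0∞ := 2 * k with hCdef
  have hCi : C ≠ ∞ := by
    rw [hCdef, hkdef]
    exact ENNReal.mul_ne_top (by norm_num) (ENNReal.natCast_ne_top kk)
  have hkey : ∀ (π : α × α → α) (hπ : Measurable π) (ρ : Measure α),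
      IsProbabilityMeasure ρ → ξ.map π ≪ ρ →
      B ⊆ {ω | (ξ.map π).rnDeriv ρ (π ω) ≤ k} → ξ'.map π ≤ C • ρ := by
    intro π hπ ρ hρ hac hsub
    haveI := hρ
    have key := aux_marginal ξ ρ π hπ hac k B hsub hB
    rw [Measure.le_iff]
    intro S hS
    rw [hξ'def, Measure.map_smul, Measure.smul_apply, smul_eq_mul,
      Measure.smul_apply, smul_eq_mul]
    calc (ξ B)⁻¹ * ((ξ.restrict B).map π S) ≤ 2 * (k * ρ S) := by
          refine mul_le_mul' hBinv2 ?_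
          have := (Measure.le_iff.mp key) S hS
          simpa [Measure.smul_apply, smul_eq_mul] using this
      _ = C * ρ S := by rw [hCdef, mul_assoc]
  have hle1 : ξ'.map Prod.fst ≤ C • μ :=
    hkey Prod.fst measurable_fst μ ‹_› hac1 (fun ω hω => hω.1)
  have hle2 : ξ'.map Prod.snd ≤ C • ν :=
    hkey Prod.snd measurable_snd ν ‹_› hac2 (fun ω hω => hω.2)
  have hac1' : ξ'.map Prod.fst ≪ μ :=
    (Measure.absolutelyContinuous_of_le hle1).trans Measure.smul_absolutelyContinuous
  have hac2' : ξ'.map Prod.snd ≪ ν :=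
    (Measure.absolutelyContinuous_of_le hle2).trans Measure.smul_absolutelyContinuous
  haveI : IsProbabilityMeasure (ξ'.map Prod.fst) :=
    Measure.isProbabilityMeasure_map measurable_fst.aemeasurable
  haveI : IsProbabilityMeasure (ξ'.map Prod.snd) :=
    Measure.isProbabilityMeasure_map measurable_snd.aemeasurable
  set R : ℝ := 2 * (kk : ℝ) with hRdef
  have hCR : ENNReal.ofReal R = C := by
    rw [hRdef, ENNReal.ofReal_mul (by norm_num), hCdef, hkdef, ENNReal.ofReal_natCast]
    norm_num
  have hR1 : (1:ℝ) ≤ R := by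
    rw [hRdef]
    have : (1:ℝ) ≤ (kk:ℝ) := by exact_mod_cast hk1
    linarith
  have hLp : ∀ (π : α × α → α) (ρ : Measure α), IsProbabilityMeasure ρ →
      IsFiniteMeasure (ξ'.map π) → ξ'.map π ≤ C • ρ →
      (∫⁻ ω, ((ξ'.map π).rnDeriv ρ ω) ^ (2:ℝ) ∂ρ) ^ (1 / (2:ℝ)) ≤ ENNReal.ofReal R := by
    intro π ρ hρ hfin hle
    haveI := hρ; haveI := hfin
    have hrd := rnDeriv_le_const (ξ'.map π) ρ C hle
    have hint : ∫⁻ ω, ((ξ'.map π).rnDeriv ρ ω) ^ (2:ℝ) ∂ρ ≤ C ^ (2:ℝ) := by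
      calc ∫⁻ ω, ((ξ'.map π).rnDeriv ρ ω) ^ (2:ℝ) ∂ρ
          ≤ ∫⁻ _, C ^ (2:ℝ) ∂ρ := lintegral_mono_ae (hrd.mono fun a ha =>
            ENNReal.rpow_le_rpow ha (by norm_num))
        _ = C ^ (2:ℝ) := by rw [lintegral_const, measure_univ, mul_one]
    calc (∫⁻ ω, ((ξ'.map π).rnDeriv ρ ω) ^ (2:ℝ) ∂ρ) ^ (1 / (2:ℝ))
        ≤ (C ^ (2:ℝ)) ^ (1 / (2:ℝ)) := ENNReal.rpow_le_rpow hint (by norm_num)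
      _ = C := by
          rw [← ENNReal.rpow_mul]
          norm_num
      _ = ENNReal.ofReal R := hCR.symm
  refine ⟨R, hR1, ξ', ⟨⟨hξ'prob, hac1', hac2'⟩, hLp Prod.fst μ ‹_› (by infer_instance) hle1,
    hLp Prod.snd ν ‹_› (by infer_instance) hle2⟩, ?_⟩
  intro A
  calc ξ A - ENNReal.ofReal (c / 4) ≤ ξ A - ξ Bᶜ := tsub_le_tsub le_rfl hBcc
    _ ≤ ξ (A ∩ B) := by
        refine tsub_le_iff_right.mpr ?_
        refine le_trans (measure_mono ?_) (measure_union_le _ _)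
        intro ω hω
        by_cases hb : ω ∈ B
        · exact Or.inl ⟨hω, hb⟩
        · exact Or.inr hb
    _ = 1 * ξ (A ∩ B) := (one_mul _).symm
    _ ≤ (ξ B)⁻¹ * ξ (A ∩ B) := mul_le_mul_left hBinv1 _
    _ = ξ' A := by rw [hξ'def, Measure.smul_apply, smul_eq_mul, Measure.restrict_apply' hB]

end CondProof

end Helpers

/-- **Theorem 2.4, part II.**  Conditions (i) and (ii) are equivalent, and condition
(iii) implies (ii) (and hence (i)). -/
theorem conditions_equivalence
    {E : Type*} [MetricSpace E] [PolishSpace E] [MeasurableSpace E] [BorelSpace E]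
    (hρ : ∀ x y : E, dist x y ≤ 1)
    (P : Kernel E E) [IsMarkovKernel P]
    (L : E → Measure (ℕ → E)) (hL : IsChainLaw P L)
    (d : E → E → ℝ) (hd : IsAuxMetric d) (hd1 : ∀ x y, d x y ≤ 1)
    (x y : E) :
    (CondI L d x y ↔ CondII L d x y) ∧
    (CondIII L d x y → CondII L d x y) ∧
    (CondIII L d x y → CondI L d x y) := by
  haveI hPx : IsProbabilityMeasure (L x) := hL.prob x
  haveI hPy : IsProbabilityMeasure (L y) := hL.prob y
  have hI_II : CondI L d x y → CondII L d x y := by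
    rintro ⟨c, hc, hcond⟩
    refine ⟨2, one_lt_two, 1, le_refl 1, c, hc, ?_⟩
    intro ε hε
    refine le_trans (hcond ε hε) ?_
    refine Filter.liminf_le_liminf (Filter.Eventually.of_forall fun n => ?_) ?_ ?_
    · exact CondProof.biSup_meas_mono (fun ξ hξ => hξ.1.1)
        (CondProof.coupling_subset (L x) (L y) (le_refl 1)) _
    · exact Filter.isBoundedUnder_of ⟨0, fun n => CondProof.biSup_meas_nonneg _⟩
    · exact (Filter.isBoundedUnder_of
        ⟨1, fun n => CondProof.biSup_meas_le_one (fun ξ hξ => hξ.1.1) _⟩).isCoboundedUnder_ge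
  have hII_I : CondII L d x y → CondI L d x y := by
    rintro ⟨p, hp, R, hR, c, hc, hcond⟩
    obtain ⟨c', hc', hA⟩ := CondProof.lemmaA (L x) (L y) hp hR hc
    refine ⟨c', hc', ?_⟩
    intro ε hε
    have hev : ∀ᶠ n in Filter.atTop, (c / 2 : ℝ) <
        ⨆ ξ ∈ GenCouplingLp p R (L x) (L y),
          (ξ {ω : (ℕ → E) × (ℕ → E) | d (ω.1 n) (ω.2 n) ≤ ε}).toReal :=
      Filter.eventually_lt_of_lt_liminf (lt_of_lt_of_le (by linarith) (hcond ε hε))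
        (Filter.isBoundedUnder_of ⟨0, fun n => CondProof.biSup_meas_nonneg _⟩)
    refine Filter.le_liminf_of_le ((Filter.isBoundedUnder_of
      ⟨1, fun n => CondProof.biSup_meas_le_one (fun ξ hξ => hξ.1) _⟩).isCoboundedUnder_ge) ?_
    filter_upwards [hev] with n hn
    obtain ⟨ξ, hξmem, hξgt⟩ := CondProof.exists_of_lt_biSup (by linarith) hn
    haveI := hξmem.1.1
    have hξA : ENNReal.ofReal (c / 2) ≤ ξ {ω : (ℕ → E) × (ℕ → E) | d (ω.1 n) (ω.2 n) ≤ ε} :=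
      le_of_lt ((ENNReal.ofReal_lt_iff_lt_toReal (by linarith)
        (measure_ne_top _ _)).mpr hξgt)
    obtain ⟨η, hηmem, hηge⟩ := hA _ ξ hξmem hξA
    haveI := hηmem.1
    have hc'' : c' ≤ (η {ω : (ℕ → E) × (ℕ → E) | d (ω.1 n) (ω.2 n) ≤ ε}).toReal :=
      (ENNReal.ofReal_le_iff_le_toReal (measure_ne_top _ _)).mp hηge
    exact hc''.trans (CondProof.le_biSup_meas (fun ζ hζ => hζ.1) hηmem _)
  have hIII_II : CondIII L d x y → CondII L d x y := by
    rintro ⟨ξ, hξmem, c, hc, hcond⟩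
    haveI := hξmem.1
    obtain ⟨R, hR1, ξ', hξ'mem, hξ'ge⟩ := CondProof.lemmaC (L x) (L y) ξ hξmem hc
    haveI := hξ'mem.1.1
    refine ⟨2, one_lt_two, R, hR1, c / 2, by linarith, ?_⟩
    intro ε hε
    have hev : ∀ᶠ n in Filter.atTop,
        (3 * c / 4 : ℝ) < (ξ {ω : (ℕ → E) × (ℕ → E) | d (ω.1 n) (ω.2 n) ≤ ε}).toReal :=
      Filter.eventually_lt_of_lt_liminf (lt_of_lt_of_le (by linarith) (hcond ε hε))
        (Filter.isBoundedUnder_of ⟨0, fun n => ENNReal.toReal_nonneg⟩)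
    refine Filter.le_liminf_of_le ((Filter.isBoundedUnder_of
      ⟨1, fun n => CondProof.biSup_meas_le_one (fun ζ hζ => hζ.1.1) _⟩).isCoboundedUnder_ge) ?_
    filter_upwards [hev] with n hn
    have h1 : ξ {ω : (ℕ → E) × (ℕ → E) | d (ω.1 n) (ω.2 n) ≤ ε} - ENNReal.ofReal (c / 4) ≤
        ξ' {ω : (ℕ → E) × (ℕ → E) | d (ω.1 n) (ω.2 n) ≤ ε} := hξ'ge _
    have h2 : (ξ {ω : (ℕ → E) × (ℕ → E) | d (ω.1 n) (ω.2 n) ≤ ε}).toReal - c / 4 ≤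
        (ξ' {ω : (ℕ → E) × (ℕ → E) | d (ω.1 n) (ω.2 n) ≤ ε}).toReal := by
      have h3 := ENNReal.le_toReal_sub
        (a := ξ {ω : (ℕ → E) × (ℕ → E) | d (ω.1 n) (ω.2 n) ≤ ε})
        (b := ENNReal.ofReal (c / 4)) ENNReal.ofReal_ne_top
      rw [ENNReal.toReal_ofReal (by linarith)] at h3
      exact h3.trans (ENNReal.toReal_mono (measure_ne_top _ _) h1)
    have h4 : c / 2 ≤ (ξ' {ω : (ℕ → E) × (ℕ → E) | d (ω.1 n) (ω.2 n) ≤ ε}).toReal := by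
      linarith
    exact h4.trans (CondProof.le_biSup_meas (fun ζ hζ => hζ.1.1) hξ'mem _)
  exact ⟨⟨hI_II, hII_I⟩, hIII_II, fun h => hII_I (hIII_II h)⟩

end
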